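/- Let M ∈ M_{2n}(ℤ) with characteristic polynomial p irreducible over ℚ and without real roots. Then ℤ^{2n} together with any complex structure J commuting with M is determined up to the choice of a set of n roots of p containing exactly one from each conjugate pair; in particular, if J is a complex structure on ℝ^{2n} with MJ = JM, then the eigenvalues of M on the +i-eigenspace of J form a set of n roots of p with no two complex-conjugate to each other. -/

import Mathlib

open Polynomial Matrix

lemma aux_diag_mulVec {m : ℕ} (μ : ℂ) (v : Fin m → ℂ) :
    (Matrix.diagonal fun _ => μ) *ᵥ v = μ • v := by
  funext i; simp [Matrix.mulVec_diagonal]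

lemma aux_eval_charpoly {m : ℕ} (A : Matrix (Fin m) (Fin m) ℂ) (μ : ℂ) :
    A.charpoly.eval μ = (Matrix.diagonal (fun _ => μ) - A).det := by
  rw [Matrix.charpoly, ← Polynomial.coe_evalRingHom, RingHom.map_det]
  congr 1
  ext i j
  by_cases h : i = j <;>
    simp [h, charmatrix_apply, Matrix.diagonal, Matrix.sub_apply]

lemma aux_root_iff {m : ℕ} (A : Matrix (Fin m) (Fin m) ℂ) (μ : ℂ) :
    A.charpoly.eval μ = 0 ↔ ∃ v : Fin m → ℂ, v ≠ 0 ∧ A.mulVec v = μ • v := by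
  rw [aux_eval_charpoly, ← Matrix.exists_mulVec_eq_zero_iff]
  constructor
  · rintro ⟨v, hv0, hv⟩
    refine ⟨v, hv0, ?_⟩
    rw [Matrix.sub_mulVec, sub_eq_zero] at hv
    rw [← hv, aux_diag_mulVec]
  · rintro ⟨v, hv0, hv⟩
    exact ⟨v, hv0, by rw [Matrix.sub_mulVec, hv, sub_eq_zero, aux_diag_mulVec]⟩

lemma aux_conj_mulVec {m : ℕ} (B : Matrix (Fin m) (Fin m) ℂ)
    (hB : ∀ i j, (starRingEnd ℂ) (B i j) = B i j) (v : Fin m → ℂ) :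
    B *ᵥ (fun i => (starRingEnd ℂ) (v i)) = fun j => (starRingEnd ℂ) ((B *ᵥ v) j) := by
  funext j
  simp only [Matrix.mulVec, dotProduct, map_sum, _root_.map_mul, hB]

lemma aux_unique {m : ℕ} (A : Matrix (Fin m) (Fin m) ℂ)
    (hnd : A.charpoly.roots.Nodup) {ν : ℂ}
    (hν : A.charpoly.eval ν = 0) {v w : Fin m → ℂ}
    (hv : A *ᵥ v = ν • v) (hw : A *ᵥ w = ν • w) (hv0 : v ≠ 0) :
    ∃ c : ℂ, w = c • v := by
  by_contra hcon
  push_neg at hcon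
  have hm : 0 < m := by
    rcases Nat.eq_zero_or_pos m with h | h
    · exact absurd (funext fun i : Fin m => absurd i.2 (by omega)) hv0
    · exact h
  have hchne : A.charpoly ≠ 0 := A.charpoly_monic.ne_zero
  have hdeg : A.charpoly.natDegree = m := by
    rw [Matrix.charpoly_natDegree_eq_dim, Fintype.card_fin]
  have hcard : Multiset.card A.charpoly.roots = m := by
    have h1 := Polynomial.Splits.natDegree_eq_card_roots
      (IsAlgClosed.splits (k := ℂ) A.charpoly)
    rw [hdeg] at h1
    exact h1.symm
  set R : Finset ℂ := A.charpoly.roots.toFinset with hR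
  have hmemR : ∀ μ : ℂ, μ ∈ R ↔ A.charpoly.eval μ = 0 := by
    intro μ
    rw [hR, Multiset.mem_toFinset, Polynomial.mem_roots hchne, Polynomial.IsRoot.def]
  have hνR : ν ∈ R := (hmemR ν).2 hν
  have hRcard : R.card = m := by
    rw [hR, Multiset.toFinset_card_of_nodup hnd, hcard]
  set O := R.erase ν with hO
  have hOcard : O.card = m - 1 := by rw [hO, Finset.card_erase_of_mem hνR, hRcard]
  have hex : ∀ μ : ℂ, μ ∈ O → ∃ u : Fin m → ℂ, u ≠ 0 ∧ A *ᵥ u = μ • u := by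
    intro μ hμ
    exact (aux_root_iff A μ).1 ((hmemR μ).1 (Finset.mem_of_mem_erase hμ))
  choose uu hu0 huA using hex
  set f : Module.End ℂ (Fin m → ℂ) := Matrix.toLin' A with hf
  have hfapp : ∀ x : Fin m → ℂ, f x = A *ᵥ x := fun x => Matrix.toLin'_apply A x
  set U : {μ // μ ∈ O} → (Fin m → ℂ) := fun μ => uu μ.1 μ.2 with hU
  have hUe : ∀ μ : {μ // μ ∈ O}, U μ ∈ f.eigenspace μ.1 := fun μ =>
    Module.End.mem_eigenspace_iff.2 (by rw [hfapp, huA μ.1 μ.2])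
  have hind1 : LinearIndependent ℂ U :=
    Module.End.eigenvectors_linearIndependent' f (fun μ : {μ // μ ∈ O} => (μ : ℂ))
      Subtype.coe_injective _ (fun μ => ⟨hUe μ, hu0 μ.1 μ.2⟩)
  have hind2 : LinearIndependent ℂ ![w, v] :=
    linearIndependent_fin2.2 ⟨hv0, fun a h => hcon a h.symm⟩
  have hdisj : Disjoint (Submodule.span ℂ (Set.range U))
      (Submodule.span ℂ (Set.range ![w, v])) := by
    have h1 : Submodule.span ℂ (Set.range U) ≤ ⨆ μ ∈ (O : Set ℂ), f.eigenspace μ := by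
      rw [Submodule.span_le]
      rintro - ⟨μ, rfl⟩
      exact Submodule.mem_iSup_of_mem μ.1 (Submodule.mem_iSup_of_mem μ.2 (hUe μ))
    have h2 : Submodule.span ℂ (Set.range ![w, v]) ≤ f.eigenspace ν := by
      rw [Submodule.span_le]
      rintro - ⟨i, rfl⟩
      fin_cases i
      · exact Module.End.mem_eigenspace_iff.2 (by rw [hfapp]; simpa using hw)
      · exact Module.End.mem_eigenspace_iff.2 (by rw [hfapp]; simpa using hv)
    have hd : Disjoint (f.eigenspace ν) (⨆ μ ∈ (O : Set ℂ), f.eigenspace μ) :=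
      (Module.End.eigenspaces_iSupIndep f).disjoint_biSup
        (by simp [hO])
    exact ((hd.mono_right h1).symm.mono_right h2).symm.symm
  have hcomb : LinearIndependent ℂ (Sum.elim U ![w, v]) :=
    hind1.sum_type hind2 hdisj
  have hle := hcomb.fintype_card_le_finrank
  rw [Module.finrank_fintype_fun_eq_card, Fintype.card_fin] at hle
  rw [Fintype.card_sum, Fintype.card_coe, hOcard, Fintype.card_fin] at hle
  omega

/-- Let `M ∈ M_{2n}(ℤ)` with characteristic polynomial `p` irreducible over `ℚ` and
without real roots, and let `J` be a complex structure on `ℝ^{2n}` (`J² = −1`)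
commuting with `M`.  Then the eigenvalues of `M` on the `+i`-eigenspace of `J` form a
set of `n` roots of `p` no two of which are complex-conjugate to each other. -/
theorem stmt18 (n : ℕ) (M : Matrix (Fin (2 * n)) (Fin (2 * n)) ℤ)
    (hirr : Irreducible (M.map ((↑) : ℤ → ℚ)).charpoly)
    (hreal : ∀ x : ℝ,
      ¬(((M.map ((↑) : ℤ → ℚ)).charpoly.map (algebraMap ℚ ℝ)).IsRoot x))
    (J : Matrix (Fin (2 * n)) (Fin (2 * n)) ℝ)
    (hJ : J * J = -1)
    (hcomm : M.map ((↑) : ℤ → ℝ) * J = J * M.map ((↑) : ℤ → ℝ)) :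
    ∃ s : Finset ℂ, s.card = n ∧
      (∀ μ ∈ s, Polynomial.aeval μ (M.map ((↑) : ℤ → ℚ)).charpoly = 0) ∧
      (∀ μ ∈ s, ∀ ν ∈ s, (starRingEnd ℂ) μ ≠ ν) ∧
      (∀ μ : ℂ, μ ∈ s ↔ ∃ v : Fin (2 * n) → ℂ, v ≠ 0 ∧
        Matrix.toLin' (J.map ((↑) : ℝ → ℂ)) v = Complex.I • v ∧
        Matrix.toLin' (M.map ((↑) : ℤ → ℂ)) v = μ • v) := by
  classical
  set p : ℚ[X] := (M.map ((↑) : ℤ → ℚ)).charpoly with hp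
  set A : Matrix (Fin (2*n)) (Fin (2*n)) ℂ := M.map ((↑) : ℤ → ℂ) with hA
  set Jc : Matrix (Fin (2*n)) (Fin (2*n)) ℂ := J.map ((↑) : ℝ → ℂ) with hJcd
  set q : ℂ[X] := A.charpoly with hqd
  have hqp : q = p.map (algebraMap ℚ ℂ) := by
    rw [hqd, hA, hp]
    have h : M.map ((↑) : ℤ → ℂ) = (M.map ((↑) : ℤ → ℚ)).map (⇑(algebraMap ℚ ℂ)) := by
      rw [Matrix.map_map]; congr 1
    rw [h, Matrix.charpoly_map]
  have haeval : ∀ μ : ℂ, aeval μ p = q.eval μ := by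
    intro μ; rw [hqp, aeval_def, eval_map]
  have hnd : q.roots.Nodup := by
    rw [hqp]; exact Polynomial.nodup_roots (hirr.separable.map)
  have hchne : q ≠ 0 := A.charpoly_monic.ne_zero
  have hdeg : q.natDegree = 2*n := by
    rw [hqd, Matrix.charpoly_natDegree_eq_dim, Fintype.card_fin]
  have hcard : Multiset.card q.roots = 2*n := by
    have h1 := Polynomial.Splits.natDegree_eq_card_roots (IsAlgClosed.splits (k := ℂ) q)
    rw [hdeg] at h1
    exact h1.symm
  have hJc2 : Jc * Jc = -1 := by
    have h := congrArg (algebraMap ℝ ℂ).mapMatrix hJ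
    rw [_root_.map_mul, map_neg, _root_.map_one] at h
    simpa [RingHom.mapMatrix_apply, hJcd] using h
  have hAJ : A * Jc = Jc * A := by
    have h := congrArg (algebraMap ℝ ℂ).mapMatrix hcomm
    rw [_root_.map_mul, _root_.map_mul] at h
    have hMr : (M.map ((↑) : ℤ → ℝ)).map (⇑(algebraMap ℝ ℂ)) = A := by
      rw [hA, Matrix.map_map]; congr 1
    rw [RingHom.mapMatrix_apply, RingHom.mapMatrix_apply, hMr] at h
    simpa [RingHom.mapMatrix_apply, hJcd, hMr] using h
  have hAconj : ∀ i j, (starRingEnd ℂ) (A i j) = A i j := by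
    intro i j; rw [hA]; simp [Matrix.map_apply]
  have hJconj : ∀ i j, (starRingEnd ℂ) (Jc i j) = Jc i j := by
    intro i j; rw [hJcd]; simp [Matrix.map_apply]
  set P : ℂ → Prop := fun μ => ∃ v : Fin (2*n) → ℂ,
    v ≠ 0 ∧ Jc *ᵥ v = Complex.I • v ∧ A *ᵥ v = μ • v with hPd
  have hProot : ∀ μ : ℂ, P μ → q.eval μ = 0 := by
    rintro μ ⟨v, hv0, -, hvA⟩
    exact (aux_root_iff A μ).2 ⟨v, hv0, hvA⟩
  set s : Finset ℂ := q.roots.toFinset.filter P with hsd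
  have hmem : ∀ μ : ℂ, μ ∈ s ↔ P μ := by
    intro μ
    rw [hsd, Finset.mem_filter, Multiset.mem_toFinset, Polynomial.mem_roots hchne]
    exact ⟨fun h => h.2, fun h => ⟨hProot μ h, h⟩⟩
  -- conjugation sends a (μ, -I)-eigenvector to a witness for conj μ
  have hconjvec : ∀ (μ : ℂ) (v : Fin (2*n) → ℂ), v ≠ 0 →
      Jc *ᵥ v = (-Complex.I) • v → A *ᵥ v = μ • v → P ((starRingEnd ℂ) μ) := by
    intro μ v hv0 hvJ hvA
    set w : Fin (2*n) → ℂ := fun i => (starRingEnd ℂ) (v i) with hwd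
    have hw0 : w ≠ 0 := by
      intro h
      apply hv0
      funext i
      have h2 : (starRingEnd ℂ) (v i) = 0 := congrFun h i
      simpa using h2
    refine ⟨w, hw0, ?_, ?_⟩
    · rw [hwd, aux_conj_mulVec Jc hJconj v, hvJ]
      funext j
      simp only [Pi.smul_apply, smul_eq_mul, _root_.map_mul, map_neg, Complex.conj_I]
      ring
    · rw [hwd, aux_conj_mulVec A hAconj v, hvA]
      funext j
      simp only [Pi.smul_apply, smul_eq_mul, _root_.map_mul]
  have hcover : ∀ μ : ℂ, q.eval μ = 0 → P μ ∨ P ((starRingEnd ℂ) μ) := by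
    intro μ hμ
    obtain ⟨v, hv0, hvA⟩ := (aux_root_iff A μ).1 hμ
    have hJvv : Jc *ᵥ (Jc *ᵥ v) = -v := by
      rw [Matrix.mulVec_mulVec, hJc2, Matrix.neg_mulVec, Matrix.one_mulVec]
    set vp : Fin (2*n) → ℂ := (2 : ℂ)⁻¹ • (v - Complex.I • (Jc *ᵥ v)) with hvpd
    by_cases hvp0 : vp = 0
    · right
      have h1 : v - Complex.I • (Jc *ᵥ v) = 0 := by
        have h2 := congrArg (fun x => (2:ℂ) • x) hvp0
        simpa [hvpd, smul_smul] using h2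
      have h1' : v = Complex.I • (Jc *ᵥ v) := by
        rwa [sub_eq_zero] at h1
      have hJv : Jc *ᵥ v = (-Complex.I) • v := by
        calc Jc *ᵥ v = Jc *ᵥ (Complex.I • (Jc *ᵥ v)) := by rw [← h1']
        _ = Complex.I • (Jc *ᵥ (Jc *ᵥ v)) := by rw [Matrix.mulVec_smul]
        _ = Complex.I • (-v) := by rw [hJvv]
        _ = (-Complex.I) • v := by rw [smul_neg, neg_smul]
      exact hconjvec μ v hv0 hJv hvA
    · left
      have hJvp : Jc *ᵥ vp = Complex.I • vp := by
        rw [hvpd, Matrix.mulVec_smul, Matrix.mulVec_sub, Matrix.mulVec_smul, hJvv]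
        funext j
        simp only [Pi.smul_apply, Pi.sub_apply, Pi.neg_apply, smul_eq_mul]
        linear_combination (2:ℂ)⁻¹ * ((Jc *ᵥ v) j) * Complex.I_sq
      have hAvp : A *ᵥ vp = μ • vp := by
        have hAJv : A *ᵥ (Jc *ᵥ v) = μ • (Jc *ᵥ v) := by
          rw [Matrix.mulVec_mulVec, hAJ, ← Matrix.mulVec_mulVec, hvA, Matrix.mulVec_smul]
        rw [hvpd, Matrix.mulVec_smul, Matrix.mulVec_sub, Matrix.mulVec_smul, hAJv, hvA]
        funext j
        simp only [Pi.smul_apply, Pi.sub_apply, smul_eq_mul]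
        ring
      exact ⟨vp, hvp0, hJvp, hAvp⟩
  have hdisjoint : ∀ μ ∈ s, ∀ ν ∈ s, (starRingEnd ℂ) μ ≠ ν := by
    intro μ hμ ν hν hc
    obtain ⟨v, hv0, hvJ, hvA⟩ := (hmem μ).1 hμ
    obtain ⟨w, hw0, hwJ, hwA⟩ := (hmem ν).1 hν
    set vb : Fin (2*n) → ℂ := fun i => (starRingEnd ℂ) (v i) with hvbd
    have hvb0 : vb ≠ 0 := by
      intro h
      apply hv0
      funext i
      have h2 : (starRingEnd ℂ) (v i) = 0 := congrFun h i
      simpa using h2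
    have hvbA : A *ᵥ vb = ν • vb := by
      rw [hvbd, aux_conj_mulVec A hAconj v, hvA]
      funext j
      simp only [Pi.smul_apply, smul_eq_mul, _root_.map_mul]
      rw [hc]
    have hvbJ : Jc *ᵥ vb = (-Complex.I) • vb := by
      rw [hvbd, aux_conj_mulVec Jc hJconj v, hvJ]
      funext j
      simp only [Pi.smul_apply, smul_eq_mul, _root_.map_mul, Complex.conj_I, neg_mul]
    obtain ⟨c, hcw⟩ := aux_unique A hnd (hProot ν ⟨w, hw0, hwJ, hwA⟩) hvbA hwA hvb0
    have hwJ2 : Jc *ᵥ w = (-Complex.I) • w := by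
      rw [hcw, Matrix.mulVec_smul, hvbJ]
      funext j
      simp only [Pi.smul_apply, smul_eq_mul]
      ring
    have hiw : Complex.I • w = (-Complex.I) • w := hwJ.symm.trans hwJ2
    apply hw0
    funext i
    have hi := congrFun hiw i
    simp only [Pi.smul_apply, smul_eq_mul, neg_mul] at hi
    have : (2 * Complex.I) * w i = 0 := by linear_combination hi
    have h2I : (2 * Complex.I) ≠ 0 := by
      simp [Complex.I_ne_zero]
    exact (mul_eq_zero.1 this).resolve_left h2I
  have hconjroot : ∀ μ : ℂ, q.eval μ = 0 → q.eval ((starRingEnd ℂ) μ) = 0 := by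
    intro μ hμ
    have hqconj : q.map (starRingEnd ℂ) = q := by
      rw [hqp, Polynomial.map_map]
      congr 1
      refine RingHom.ext fun x => ?_
      rw [RingHom.comp_apply, eq_ratCast]
      exact map_ratCast (starRingEnd ℂ) x
    have h2 : (q.map (starRingEnd ℂ)).eval ((starRingEnd ℂ) μ) = 0 := by
      rw [eval_map, Polynomial.eval₂_at_apply, hμ, map_zero]
    rwa [hqconj] at h2
  have hsub : q.roots.toFinset ⊆ s ∪ s.image (starRingEnd ℂ) := by
    intro μ hμ
    have hμ0 : q.eval μ = 0 := by
      rw [Multiset.mem_toFinset, Polynomial.mem_roots hchne] at hμ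
      exact hμ
    rcases hcover μ hμ0 with h | h
    · exact Finset.mem_union_left _ ((hmem μ).2 h)
    · refine Finset.mem_union_right _ (Finset.mem_image.2 ⟨(starRingEnd ℂ) μ, (hmem _).2 h, ?_⟩)
      simp
  have hsup : s ∪ s.image (starRingEnd ℂ) ⊆ q.roots.toFinset := by
    intro μ hμ
    rcases Finset.mem_union.1 hμ with h | h
    · rw [hsd] at h
      exact Finset.mem_of_mem_filter μ h
    · obtain ⟨ν, hν, rfl⟩ := Finset.mem_image.1 h
      rw [Multiset.mem_toFinset, Polynomial.mem_roots hchne]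
      exact hconjroot ν (hProot ν ((hmem ν).1 hν))
  have huni : q.roots.toFinset = s ∪ s.image (starRingEnd ℂ) :=
    Finset.Subset.antisymm hsub hsup
  have hdisj2 : Disjoint s (s.image (starRingEnd ℂ)) := by
    rw [Finset.disjoint_left]
    intro μ hμ hμ'
    obtain ⟨ν, hν, hνe⟩ := Finset.mem_image.1 hμ'
    exact hdisjoint ν hν μ hμ hνe
  have hcards : 2*n = s.card + s.card := by
    calc 2*n = q.roots.toFinset.card := by
          rw [Multiset.toFinset_card_of_nodup hnd, hcard]
    _ = (s ∪ s.image (starRingEnd ℂ)).card := by rw [huni]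
    _ = s.card + (s.image (starRingEnd ℂ)).card := Finset.card_union_of_disjoint hdisj2
    _ = s.card + s.card := by
          rw [Finset.card_image_of_injective _ (starRingEnd ℂ).injective]
  refine ⟨s, by omega, ?_, hdisjoint, ?_⟩
  · intro μ hμ
    rw [haeval]
    exact hProot μ ((hmem μ).1 hμ)
  · intro μ
    rw [hmem μ]
    simp only [Matrix.toLin'_apply]
    exact Iff.rfl
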